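/- Let G be a transitive permutation group on Ω and let B be a G-invariant partition whose blocks have prime cardinality p and are the orbits of a semiregular element ρ ∈ G. Define y ≡_B z if there is a sequence y₁ = y, ..., y_k = z of points such that for each i, the block B_{y_{i+1}} of B containing y_{i+1} is not contained in any single orbit of the stabilizer G_{y_i}. Then ≡_B is an equivalence relation on Ω, and its equivalence classes form a G-invariant partition. -/

import Mathlib

/-- The chain relation ≡_B (with respect to a G-invariant partition B whose
blocks have prime cardinality p and are the orbits of a semiregular ρ ∈ G) is
an equivalence relation, and its classes form a G-invariant partition. -/
theorem stmt_8 {Ω : Type*} (G : Subgroup (Equiv.Perm Ω))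
    (htrans : ∀ x y : Ω, ∃ g ∈ G, g x = y)
    (B : Set (Set Ω)) (hB : Setoid.IsPartition B)
    (hinv : ∀ b ∈ B, ∀ g ∈ G, (⇑g) '' b ∈ B)
    (p : ℕ) (hp : p.Prime)
    (ρ : Equiv.Perm Ω) (hρG : ρ ∈ G)
    (hρorb : ∀ b ∈ B, ∃ z : Ω, b = {x : Ω | ∃ j : ℤ, x = (ρ ^ j) z})
    (hcard : ∀ b ∈ B, Nat.card b = p)
    (r : Ω → Ω → Prop)
    (hr : ∀ y z : Ω, r y z ↔ ∃ (n : ℕ) (c : ℕ → Ω), c 0 = y ∧ c n = z ∧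
      ∀ i < n, ∀ b ∈ B, c (i + 1) ∈ b →
        ¬ ∃ w : Ω, b ⊆ {u : Ω | ∃ g ∈ G, g (c i) = c i ∧ g w = u}) :
    Equivalence r ∧
      ∀ g ∈ G, ∀ y : Ω, (fun u => g u) '' {z : Ω | r y z} = {z : Ω | r (g y) z} := by
  -- The one-step relation
  set S : Ω → Ω → Prop := fun y z => ∀ b ∈ B, z ∈ b →
      ¬ ∃ w : Ω, b ⊆ {u : Ω | ∃ g ∈ G, g y = y ∧ g w = u} with hSdef
  -- r is the reflexive-transitive closure of S
  have hrS : ∀ y z : Ω, r y z ↔ Relation.ReflTransGen S y z := by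
    intro y z
    rw [hr]
    constructor
    · rintro ⟨n, c, h0, hn, hcond⟩
      subst h0; subst hn
      clear hr
      induction n with
      | zero => exact Relation.ReflTransGen.refl
      | succ n ih =>
        exact (ih (fun i hi => hcond i (Nat.lt_succ_of_lt hi))).tail
          (fun b hb hzb => hcond n (Nat.lt_succ_self n) b hb hzb)
    · intro h
      induction h with
      | refl =>
        exact ⟨0, fun _ => y, rfl, rfl, fun i hi => absurd hi (Nat.not_lt_zero i)⟩
      | @tail m z' hym hmz ih =>
        obtain ⟨n, c, h0, hn, hcond⟩ := ih
        refine ⟨n + 1, fun i => if i ≤ n then c i else z', by simp [h0], by simp, ?_⟩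
        intro i hi b hb hmem
        simp only [] at hmem ⊢
        rcases Nat.lt_or_ge i n with h' | h'
        · have e1 : (if i ≤ n then c i else z') = c i := if_pos (by omega)
          have e2 : (if i + 1 ≤ n then c (i + 1) else z') = c (i + 1) := if_pos (by omega)
          rw [e2] at hmem
          rw [e1]
          exact hcond i h' b hb hmem
        · have hin : i = n := by omega
          subst hin
          have e1 : (if i ≤ i then c i else z') = c i := if_pos le_rfl
          have e2 : (if i + 1 ≤ i then c (i + 1) else z') = z' := if_neg (by omega)
          rw [e2] at hmem
          rw [e1, hn]
          exact hmz b hb hmem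
  -- the key symmetry fact: if the block of z is inside a single G_y-orbit,
  -- then the block of y is inside a single G_z-orbit
  have key : ∀ y z : Ω,
      (∃ b ∈ B, z ∈ b ∧ ∃ w : Ω, b ⊆ {u : Ω | ∃ g ∈ G, g y = y ∧ g w = u}) →
      (∃ b ∈ B, y ∈ b ∧ ∃ w : Ω, b ⊆ {u : Ω | ∃ g ∈ G, g z = z ∧ g w = u}) := by
    rintro y z ⟨b, hb, hzb, w, hw⟩
    obtain ⟨g0, hg0, hg0y, hg0w⟩ := hw hzb
    have hg0inv : g0⁻¹ y = y := by
      conv_lhs => rw [← hg0y]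
      simp
    -- b ⊆ G_y · z
    have hbz : ∀ u ∈ b, ∃ g ∈ G, g y = y ∧ g z = u := by
      intro u hu
      obtain ⟨g, hg, hgy, hgw⟩ := hw hu
      refine ⟨g * g0⁻¹, mul_mem hg (inv_mem hg0), ?_, ?_⟩
      · rw [Equiv.Perm.mul_apply, hg0inv, hgy]
      · rw [Equiv.Perm.mul_apply, ← hg0w]
        simp [hgw]
    -- b is the ρ-orbit of z
    obtain ⟨z0, hz0⟩ := hρorb b hb
    obtain ⟨j0, hj0⟩ : ∃ j : ℤ, z = (ρ ^ j) z0 := by rwa [hz0] at hzb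
    -- the block of y is a ρ-orbit containing y
    obtain ⟨b', hb'⟩ := (hB.2 y).exists
    obtain ⟨hb'B, hyb'⟩ := hb'
    obtain ⟨y0, hy0⟩ := hρorb b' hb'B
    obtain ⟨j1, hj1⟩ : ∃ j : ℤ, y = (ρ ^ j) y0 := by rwa [hy0] at hyb'
    refine ⟨b', hb'B, hyb', y, ?_⟩
    intro x hx
    obtain ⟨j, hj⟩ : ∃ j : ℤ, x = (ρ ^ j) y0 := by rwa [hy0] at hx
    set k : ℤ := j - j1 with hk
    have hx2 : x = (ρ ^ k) y := by
      rw [hj1, ← Equiv.Perm.mul_apply, ← zpow_add, hj]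
      congr 2
      omega
    have hρz : (ρ ^ (-k)) z ∈ b := by
      rw [hz0]
      refine ⟨-k + j0, ?_⟩
      rw [hj0, ← Equiv.Perm.mul_apply, ← zpow_add]
    obtain ⟨g, hg, hgy, hgz⟩ := hbz _ hρz
    refine ⟨ρ ^ k * g, mul_mem (zpow_mem hρG k) hg, ?_, ?_⟩
    · rw [Equiv.Perm.mul_apply, hgz, ← Equiv.Perm.mul_apply, ← zpow_add,
        add_neg_cancel, zpow_zero, Equiv.Perm.one_apply]
    · rw [Equiv.Perm.mul_apply, hgy, ← hx2]
  have hSsymm : ∀ y z : Ω, S y z → S z y := by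
    intro y z h b hb hyb hex
    obtain ⟨b', hb'B, hzb', w', hw'⟩ := key z y ⟨b, hb, hyb, hex⟩
    exact h b' hb'B hzb' ⟨w', hw'⟩
  have hsymm : ∀ {y z : Ω}, Relation.ReflTransGen S y z → Relation.ReflTransGen S z y := by
    intro y z h
    induction h with
    | refl => exact Relation.ReflTransGen.refl
    | tail _ h2 ih => exact Relation.ReflTransGen.head (hSsymm _ _ h2) ih
  -- S is G-equivariant
  have hScongr : ∀ g ∈ G, ∀ y z : Ω, S y z → S (g y) (g z) := by
    intro g hg y z h b hb hzb ⟨w, hw⟩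
    refine h ((⇑g⁻¹) '' b) (hinv b hb g⁻¹ (inv_mem hg)) ⟨g z, hzb, by simp⟩
      ⟨g⁻¹ w, ?_⟩
    rintro u ⟨v, hv, rfl⟩
    obtain ⟨h', hh', hfix, hmap⟩ := hw hv
    refine ⟨g⁻¹ * h' * g, mul_mem (mul_mem (inv_mem hg) hh') hg, ?_, ?_⟩
    · simp only [Equiv.Perm.mul_apply]
      rw [hfix]
      simp
    · simp only [Equiv.Perm.mul_apply]
      rw [show g (g⁻¹ w) = w from g.apply_symm_apply w, hmap]
  have hrcongr : ∀ g ∈ G, ∀ y z : Ω, r y z → r (g y) (g z) := by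
    intro g hg y z h
    exact (hrS _ _).2 (Relation.ReflTransGen.lift (⇑g) (hScongr g hg) _ _ ((hrS _ _).1 h))
  constructor
  · refine ⟨fun y => (hr y y).2 ⟨0, fun _ => y, rfl, rfl,
      fun i hi => absurd hi (Nat.not_lt_zero i)⟩, ?_, ?_⟩
    · intro y z h
      exact (hrS _ _).2 (hsymm ((hrS _ _).1 h))
    · intro x y z h1 h2
      exact (hrS _ _).2 (((hrS _ _).1 h1).trans ((hrS _ _).1 h2))
  · intro g hg y
    ext z
    simp only [Set.mem_image, Set.mem_setOf_eq]
    constructor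
    · rintro ⟨u, hu, rfl⟩
      exact hrcongr g hg y u hu
    · intro hz
      refine ⟨g⁻¹ z, ?_, by simp⟩
      have := hrcongr g⁻¹ (inv_mem hg) (g y) z hz
      simpa using this
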